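/- arXiv:1609.06432 — 3 statements merged into one kernel-verified Lean document; each statement's English description precedes it below -/
import Mathlib

section
/- Let A and B be finite alphabets, P_A a probability distribution on A, and W a stochastic kernel assigning to each a ∈ A a probability distribution W(·|a) on B; define the joint distribution P_{AB}(a, b) = P_A(a)·W(b|a) on A × B. For each n, let μ_n be a probability distribution on A^n, and define the joint distribution ν_n on A^n × B^n by ν_n(a^{1:n}, b^{1:n}) = μ_n(a^{1:n}) · Π_{i=1}^n W(b^i | a^i) (i.e., B^{1:n} is generated from A^{1:n} by applying the kernel i.i.d. coordinatewise). Fix ε > 0 and suppose lim_{n→∞} μ_n{ a^{1:n} : 𝕍(T_{a^{1:n}}, P_A) > ε } = 0. Then for every ε' > ε, lim_{n→∞} ν_n{ (a^{1:n}, b^{1:n}) : 𝕍(T_{a^{1:n} b^{1:n}}, P_{AB}) > ε' } = 0. -/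
open Finset Filter

set_option linter.unusedSectionVars false
set_option maxHeartbeats 1000000

section Aux

variable {A B : Type*} [Fintype A] [Fintype B] [DecidableEq A] [DecidableEq B]

/-- expectation under the product kernel measure conditioned on `a` -/
private def Ex (W : A → B → ℝ) {n : ℕ} (a : Fin n → A) (F : (Fin n → B) → ℝ) : ℝ :=
  ∑ b : Fin n → B, (∏ i, W (a i) (b i)) * F b

private lemma Ex_prod (W : A → B → ℝ) {n : ℕ} (a : Fin n → A) (f : Fin n → B → ℝ) :
    Ex W a (fun b => ∏ i, f i (b i)) = ∏ i, ∑ x, W (a i) x * f i x := by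
  rw [Ex, Finset.prod_univ_sum, Fintype.piFinset_univ]
  exact Finset.sum_congr rfl fun b _ => Finset.prod_mul_distrib.symm

private lemma Ex_single (W : A → B → ℝ) (hW1 : ∀ a, ∑ b, W a b = 1) {n : ℕ}
    (a : Fin n → A) (i : Fin n) (g : B → ℝ) :
    Ex W a (fun b => g (b i)) = ∑ x, W (a i) x * g x := by
  have h := Ex_prod W a (fun k x => if k = i then g x else 1)
  have h1 : (fun b : Fin n → B => ∏ k, if k = i then g (b k) else 1)
      = fun b => g (b i) := by
    funext b
    rw [Finset.prod_ite_eq']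
    simp
  rw [h1] at h
  rw [h]
  have h2 : ∀ k : Fin n, (∑ x, W (a k) x * (if k = i then g x else 1))
      = if k = i then ∑ x, W (a i) x * g x else 1 := by
    intro k
    split_ifs with hk
    · subst hk; simp
    · simp [hW1]
  rw [Finset.prod_congr rfl (fun k _ => h2 k), Finset.prod_ite_eq']
  simp

private lemma Ex_pair (W : A → B → ℝ) (hW1 : ∀ a, ∑ b, W a b = 1) {n : ℕ}
    (a : Fin n → A) {i j : Fin n} (hij : i ≠ j) (g h : B → ℝ) :
    Ex W a (fun b => g (b i) * h (b j))
      = (∑ x, W (a i) x * g x) * (∑ x, W (a j) x * h x) := by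
  have hp := Ex_prod W a (fun k x => (if k = i then g x else 1) * (if k = j then h x else 1))
  have h1 : (fun b : Fin n → B =>
      ∏ k, (if k = i then g (b k) else 1) * (if k = j then h (b k) else 1))
      = fun b => g (b i) * h (b j) := by
    funext b
    rw [Finset.prod_mul_distrib, Finset.prod_ite_eq', Finset.prod_ite_eq']
    simp
  rw [h1] at hp
  rw [hp]
  have h2 : ∀ k : Fin n,
      (∑ x, W (a k) x * ((if k = i then g x else 1) * (if k = j then h x else 1)))
      = (if k = i then ∑ x, W (a i) x * g x else 1)
        * (if k = j then ∑ x, W (a j) x * h x else 1) := by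
    intro k
    by_cases hk : k = i
    · subst hk
      simp [hij]
    · by_cases hk' : k = j
      · subst hk'
        simp [hk]
      · simp [hk, hk', hW1]
  rw [Finset.prod_congr rfl (fun k _ => h2 k), Finset.prod_mul_distrib,
    Finset.prod_ite_eq', Finset.prod_ite_eq']
  simp

private lemma Ex_sq_sum_le (W : A → B → ℝ) (hW0 : ∀ a b, 0 ≤ W a b)
    (hW1 : ∀ a, ∑ b, W a b = 1) {n : ℕ} (a : Fin n → A)
    (f : Fin n → B → ℝ) (hmean : ∀ k, ∑ x, W (a k) x * f k x = 0)
    (hbd : ∀ k x, (f k x) ^ 2 ≤ 1) :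
    Ex W a (fun b => (∑ k, f k (b k)) ^ 2) ≤ n := by
  have lin : Ex W a (fun b => (∑ k, f k (b k)) ^ 2)
      = ∑ k, ∑ l, Ex W a (fun b => f k (b k) * f l (b l)) := by
    unfold Ex
    have : ∀ b : Fin n → B, (∑ k, f k (b k)) ^ 2 = ∑ k, ∑ l, f k (b k) * f l (b l) := by
      intro b; rw [sq, Finset.sum_mul_sum]
    simp_rw [this, Finset.mul_sum]
    rw [Finset.sum_comm]
    exact Finset.sum_congr rfl fun k _ => Finset.sum_comm
  rw [lin]
  have hdiag : ∀ k : Fin n, ∑ l, Ex W a (fun b => f k (b k) * f l (b l)) ≤ 1 := by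
    intro k
    have : ∑ l, Ex W a (fun b => f k (b k) * f l (b l))
        = Ex W a (fun b => f k (b k) * f k (b k)) := by
      apply Finset.sum_eq_single
      · intro l _ hlk
        rw [Ex_pair W hW1 a (Ne.symm hlk), hmean k, zero_mul]
      · intro hk; exact absurd (Finset.mem_univ k) hk
    rw [this, Ex_single W hW1 a k (fun x => f k x * f k x)]
    calc ∑ x, W (a k) x * (f k x * f k x) ≤ ∑ x, W (a k) x * 1 := by
          apply Finset.sum_le_sum
          intro x _
          have := hbd k x
          rw [sq] at this
          exact mul_le_mul_of_nonneg_left this (hW0 _ _)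
      _ = 1 := by simp [hW1]
  calc ∑ k, ∑ l, Ex W a (fun b => f k (b k) * f l (b l)) ≤ ∑ _k : Fin n, (1:ℝ) :=
        Finset.sum_le_sum fun k _ => hdiag k
    _ = n := by simp

private lemma markov {β : Type*} [Fintype β] (w Y : β → ℝ) (hw : ∀ b, 0 ≤ w b)
    (hY : ∀ b, 0 ≤ Y b) {t : ℝ} (ht : 0 < t) :
    ∑ b ∈ Finset.univ.filter (fun b => t < Y b), w b
      ≤ (1 / t ^ 2) * ∑ b, w b * (Y b) ^ 2 := by
  rw [Finset.mul_sum]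
  refine le_trans (Finset.sum_le_sum ?_)
    (Finset.sum_le_sum_of_subset_of_nonneg (Finset.filter_subset _ _) ?_)
  · intro b hb
    rw [Finset.mem_filter] at hb
    have h2 : w b * t ^ 2 ≤ w b * (Y b) ^ 2 := by
      apply mul_le_mul_of_nonneg_left _ (hw b)
      have := hb.2
      nlinarith
    calc w b = (1 / t ^ 2) * (w b * t ^ 2) := by field_simp
      _ ≤ (1 / t ^ 2) * (w b * (Y b) ^ 2) := by
          apply mul_le_mul_of_nonneg_left h2
          positivity
  · intro b _ _
    have := hw b
    have := hY b
    positivity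

private lemma good_bound (PA : A → ℝ) (W : A → B → ℝ)
    (hW0 : ∀ a b, 0 ≤ W a b) (hW1 : ∀ a, ∑ b, W a b = 1)
    (PAB : A × B → ℝ) (hPAB : ∀ a b, PAB (a, b) = PA a * W a b)
    {n : ℕ} (hn : 0 < n) (a : Fin n → A) {ε ε' : ℝ} (hδ : 0 < ε' - ε)
    (ha : ∑ u, |(1 / (n : ℝ)) * (∑ i, if a i = u then (1 : ℝ) else 0) - PA u| ≤ ε) :
    ∑ b ∈ Finset.univ.filter (fun b : Fin n → B =>
        ε' < ∑ q : A × B,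
          |(1 / (n : ℝ)) * (∑ i, if (a i, b i) = q then (1 : ℝ) else 0) - PAB q|),
      (∏ i, W (a i) (b i))
    ≤ (Fintype.card (A × B) : ℝ) ^ 2 / ((ε' - ε) ^ 2 * n) := by
  classical
  set δ := ε' - ε with hδdef
  set K : ℝ := (Fintype.card (A × B) : ℝ) with hK
  have hK0 : (0 : ℝ) ≤ K := by positivity
  have hn' : (0:ℝ) < n := by exact_mod_cast hn
  -- the per-q centered function
  set f : A × B → Fin n → B → ℝ := fun q k x =>
    (if (a k, x) = q then (1:ℝ) else 0) - (if a k = q.1 then W q.1 q.2 else 0) with hf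
  -- mean zero
  have hmean : ∀ q k, ∑ x, W (a k) x * f q k x = 0 := by
    intro q k
    simp only [hf, mul_sub, Finset.sum_sub_distrib]
    have h1 : ∀ x : B, (if (a k, x) = q then (1:ℝ) else 0)
        = (if a k = q.1 then (1:ℝ) else 0) * (if x = q.2 then (1:ℝ) else 0) := by
      intro x
      by_cases h1 : a k = q.1 <;> by_cases h2 : x = q.2 <;>
        simp [Prod.ext_iff, h1, h2]
    simp_rw [h1]
    by_cases hc : a k = q.1
    · simp only [hc, if_true, mul_ite, mul_one, mul_zero, Finset.sum_ite_eq',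
        Finset.mem_univ, if_true]
      rw [← Finset.sum_mul, hW1, one_mul, sub_self]
    · simp [hc]
  -- bounded by 1
  have hWle1 : ∀ u v, W u v ≤ 1 := by
    intro u v
    calc W u v ≤ ∑ b, W u b := Finset.single_le_sum (fun b _ => hW0 u b) (Finset.mem_univ v)
      _ = 1 := hW1 u
  have hbd : ∀ q k x, (f q k x) ^ 2 ≤ 1 := by
    intro q k x
    have h1 : (0:ℝ) ≤ (if (a k, x) = q then (1:ℝ) else 0) := by positivity
    have h2 : (if (a k, x) = q then (1:ℝ) else 0) ≤ 1 := by split <;> norm_num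
    have h3 : (0:ℝ) ≤ (if a k = q.1 then W q.1 q.2 else 0) := by
      split_ifs with hh
      exacts [hW0 _ _, le_refl 0]
    have h4 : (if a k = q.1 then W q.1 q.2 else 0) ≤ 1 := by
      split_ifs with hh
      exacts [hWle1 _ _, zero_le_one]
    simp only [hf]
    nlinarith
  -- Y and Z
  set Y : A × B → (Fin n → B) → ℝ := fun q b => ∑ k, f q k (b k) with hY
  set Z : (Fin n → B) → ℝ := fun b => ∑ q : A × B, |(1 / (n:ℝ)) * Y q b| with hZ
  -- decomposition of the statistic
  have hdecomp : ∀ (b : Fin n → B) (q : A × B),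
      (1 / (n : ℝ)) * (∑ i, if (a i, b i) = q then (1 : ℝ) else 0) - PAB q
      = (1 / (n:ℝ)) * Y q b
        + ((1 / (n : ℝ)) * (∑ i, if a i = q.1 then (1 : ℝ) else 0) - PA q.1) * W q.1 q.2 := by
    intro b q
    have hY' : Y q b = (∑ i, if (a i, b i) = q then (1 : ℝ) else 0)
        - (∑ i, if a i = q.1 then (1 : ℝ) else 0) * W q.1 q.2 := by
      simp only [hY, hf, Finset.sum_sub_distrib]
      congr 1
      rw [Finset.sum_mul]
      exact Finset.sum_congr rfl fun i _ => by split <;> simp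
    have hq : PAB q = PA q.1 * W q.1 q.2 := by
      obtain ⟨u, v⟩ := q; exact hPAB u v
    rw [hY', hq]
    ring
  -- the filter set is contained in { δ < Z }
  have hsubset : Finset.univ.filter (fun b : Fin n → B =>
        ε' < ∑ q : A × B,
          |(1 / (n : ℝ)) * (∑ i, if (a i, b i) = q then (1 : ℝ) else 0) - PAB q|)
      ⊆ Finset.univ.filter (fun b => δ < Z b) := by
    intro b hb
    rw [Finset.mem_filter] at *
    refine ⟨Finset.mem_univ _, ?_⟩
    have htri : ∑ q : A × B,
        |(1 / (n : ℝ)) * (∑ i, if (a i, b i) = q then (1 : ℝ) else 0) - PAB q|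
        ≤ Z b + ε := by
      have step : ∑ q : A × B,
          |(1 / (n : ℝ)) * (∑ i, if (a i, b i) = q then (1 : ℝ) else 0) - PAB q|
          ≤ ∑ q : A × B, (|(1 / (n:ℝ)) * Y q b|
            + |(1 / (n : ℝ)) * (∑ i, if a i = q.1 then (1 : ℝ) else 0) - PA q.1| * W q.1 q.2) := by
        apply Finset.sum_le_sum
        intro q _
        rw [hdecomp b q]
        calc |(1 / (n:ℝ)) * Y q b + ((1 / (n : ℝ)) * (∑ i, if a i = q.1 then (1 : ℝ) else 0) - PA q.1) * W q.1 q.2|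
            ≤ |(1 / (n:ℝ)) * Y q b| + |((1 / (n : ℝ)) * (∑ i, if a i = q.1 then (1 : ℝ) else 0) - PA q.1) * W q.1 q.2| := abs_add_le _ _
          _ = |(1 / (n:ℝ)) * Y q b| + |(1 / (n : ℝ)) * (∑ i, if a i = q.1 then (1 : ℝ) else 0) - PA q.1| * W q.1 q.2 := by
              rw [abs_mul ((1 / (n : ℝ)) * (∑ i, if a i = q.1 then (1 : ℝ) else 0) - PA q.1) (W q.1 q.2), abs_of_nonneg (hW0 q.1 q.2)]
      rw [Finset.sum_add_distrib] at step
      have step2 : ∑ q : A × B,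
          |(1 / (n : ℝ)) * (∑ i, if a i = q.1 then (1 : ℝ) else 0) - PA q.1| * W q.1 q.2 ≤ ε := by
        rw [Fintype.sum_prod_type]
        calc ∑ u, ∑ v, |(1 / (n : ℝ)) * (∑ i, if a i = u then (1 : ℝ) else 0) - PA u| * W u v
            = ∑ u, |(1 / (n : ℝ)) * (∑ i, if a i = u then (1 : ℝ) else 0) - PA u| := by
              apply Finset.sum_congr rfl
              intro u _
              rw [← Finset.mul_sum, hW1, mul_one]
          _ ≤ ε := ha
      calc ∑ q : A × B,
          |(1 / (n : ℝ)) * (∑ i, if (a i, b i) = q then (1 : ℝ) else 0) - PAB q|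
          ≤ (∑ q : A × B, |(1 / (n:ℝ)) * Y q b|) + ∑ q : A × B,
            |(1 / (n : ℝ)) * (∑ i, if a i = q.1 then (1 : ℝ) else 0) - PA q.1| * W q.1 q.2 := step
        _ ≤ Z b + ε := by
            apply add_le_add_right step2
    have := hb.2
    simp only [hδdef]
    linarith
  -- apply markov
  have hw0 : ∀ b : Fin n → B, 0 ≤ ∏ i, W (a i) (b i) := by
    intro b; exact Finset.prod_nonneg fun i _ => hW0 _ _
  have hZ0 : ∀ b, 0 ≤ Z b := by
    intro b; exact Finset.sum_nonneg fun q _ => abs_nonneg _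
  have hmk := markov (fun b : Fin n → B => ∏ i, W (a i) (b i)) Z hw0 hZ0 hδ
  refine le_trans (le_trans (Finset.sum_le_sum_of_subset_of_nonneg hsubset
    (fun b _ _ => hw0 b)) hmk) ?_
  -- bound the second moment of Z
  have hCS : ∀ b, (Z b) ^ 2 ≤ K * ∑ q : A × B, ((1 / (n:ℝ)) * Y q b) ^ 2 := by
    intro b
    have := Finset.sum_mul_sq_le_sq_mul_sq Finset.univ (fun _ : A × B => (1:ℝ))
      (fun q => |(1 / (n:ℝ)) * Y q b|)
    simp only [one_mul, one_pow, sq_abs] at this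
    calc (Z b) ^ 2 ≤ (∑ _q : A × B, (1:ℝ)) * ∑ q : A × B, ((1 / (n:ℝ)) * Y q b) ^ 2 := this
      _ = K * ∑ q : A × B, ((1 / (n:ℝ)) * Y q b) ^ 2 := by
          simp [hK, Finset.card_univ]
  have hsum2 : ∑ b : Fin n → B, (∏ i, W (a i) (b i)) * (Z b) ^ 2
      ≤ K * (K * (1 / (n:ℝ))) := by
    calc ∑ b : Fin n → B, (∏ i, W (a i) (b i)) * (Z b) ^ 2
        ≤ ∑ b : Fin n → B, (∏ i, W (a i) (b i)) * (K * ∑ q : A × B, ((1 / (n:ℝ)) * Y q b) ^ 2) := by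
          apply Finset.sum_le_sum
          intro b _
          exact mul_le_mul_of_nonneg_left (hCS b) (hw0 b)
      _ = K * ∑ q : A × B, Ex W a (fun b => ((1 / (n:ℝ)) * Y q b) ^ 2) := by
          unfold Ex
          simp_rw [Finset.mul_sum]
          rw [Finset.sum_comm]
          apply Finset.sum_congr rfl
          intro q _
          apply Finset.sum_congr rfl
          intro b _
          ring
      _ ≤ K * (K * (1 / (n:ℝ))) := by
          apply mul_le_mul_of_nonneg_left _ (hK0)
          have hone : ∀ q : A × B, Ex W a (fun b => ((1 / (n:ℝ)) * Y q b) ^ 2) ≤ 1 / (n:ℝ) := by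
            intro q
            have hE : Ex W a (fun b => ((1 / (n:ℝ)) * Y q b) ^ 2)
                = (1 / (n:ℝ)) ^ 2 * Ex W a (fun b => (Y q b) ^ 2) := by
              unfold Ex
              rw [Finset.mul_sum]
              apply Finset.sum_congr rfl
              intro b _
              ring
            rw [hE]
            have := Ex_sq_sum_le W hW0 hW1 a (f q) (hmean q) (hbd q)
            calc (1 / (n:ℝ)) ^ 2 * Ex W a (fun b => (Y q b) ^ 2)
                ≤ (1 / (n:ℝ)) ^ 2 * n := by
                  apply mul_le_mul_of_nonneg_left _ (by positivity)
                  exact this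
              _ = 1 / (n:ℝ) := by field_simp <;> ring
          calc ∑ q : A × B, Ex W a (fun b => ((1 / (n:ℝ)) * Y q b) ^ 2)
              ≤ ∑ _q : A × B, (1 / (n:ℝ)) := Finset.sum_le_sum fun q _ => hone q
            _ = K * (1 / (n:ℝ)) := by simp [hK, Finset.card_univ] <;> ring
  calc (1 / δ ^ 2) * ∑ b : Fin n → B, (∏ i, W (a i) (b i)) * (Z b) ^ 2
      ≤ (1 / δ ^ 2) * (K * (K * (1 / (n:ℝ)))) := by
        apply mul_le_mul_of_nonneg_left hsum2 (by positivity)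
    _ = K ^ 2 / (δ ^ 2 * n) := by field_simp <;> ring


end Aux

/-- If `B^{1:n}` is generated from `A^{1:n}` by applying a stochastic kernel
`W` i.i.d. coordinatewise, and the probability (under `μ_n`) that the type of `A^{1:n}` is
more than `ε` away from `P_A` vanishes, then for every `ε' > ε` the probability (under the
joint distribution `ν_n`) that the joint type of `(A^{1:n}, B^{1:n})` is more than `ε'` away
from `P_{AB} = P_A · W` also vanishes. -/
theorem typicality_through_kernel
    {A B : Type*} [Fintype A] [Fintype B] [DecidableEq A] [DecidableEq B]
    (PA : A → ℝ) (hPA0 : ∀ a, 0 ≤ PA a) (hPA1 : ∑ a, PA a = 1)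
    (W : A → B → ℝ) (hW0 : ∀ a b, 0 ≤ W a b) (hW1 : ∀ a, ∑ b, W a b = 1)
    (PAB : A × B → ℝ) (hPAB : ∀ a b, PAB (a, b) = PA a * W a b)
    (μ : (n : ℕ) → (Fin n → A) → ℝ)
    (hμ0 : ∀ n a, 0 ≤ μ n a) (hμ1 : ∀ n, ∑ a, μ n a = 1)
    (ν : (n : ℕ) → (Fin n → A) × (Fin n → B) → ℝ)
    (hν : ∀ n p, ν n p = μ n p.1 * ∏ i, W (p.1 i) (p.2 i))
    (ε : ℝ) (hε : 0 < ε)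
    (h : Tendsto
      (fun n => ∑ a ∈ Finset.univ.filter
        (fun a : Fin n → A =>
          ε < ∑ u, |(1 / (n : ℝ)) * (∑ i, if a i = u then (1 : ℝ) else 0) - PA u|),
        μ n a)
      atTop (nhds 0)) :
    ∀ ε' > ε, Tendsto
      (fun n => ∑ p ∈ Finset.univ.filter
        (fun p : (Fin n → A) × (Fin n → B) =>
          ε' < ∑ q : A × B,
            |(1 / (n : ℝ)) * (∑ i, if (p.1 i, p.2 i) = q then (1 : ℝ) else 0) - PAB q|),
        ν n p)
      atTop (nhds 0) := by
  intro ε' hε'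
  classical
  have hδ : 0 < ε' - ε := by linarith
  set K : ℝ := (Fintype.card (A × B) : ℝ) with hK
  set G : ℕ → ℝ := fun n => ∑ a ∈ Finset.univ.filter
      (fun a : Fin n → A =>
        ε < ∑ u, |(1 / (n : ℝ)) * (∑ i, if a i = u then (1 : ℝ) else 0) - PA u|),
      μ n a with hG
  set S : ℕ → ℝ := fun n => ∑ p ∈ Finset.univ.filter
      (fun p : (Fin n → A) × (Fin n → B) =>
        ε' < ∑ q : A × B,
          |(1 / (n : ℝ)) * (∑ i, if (p.1 i, p.2 i) = q then (1 : ℝ) else 0) - PAB q|),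
      ν n p with hS
  -- nonnegativity of S
  have hS0 : ∀ n, 0 ≤ S n := by
    intro n
    apply Finset.sum_nonneg
    intro p _
    rw [hν]
    exact mul_nonneg (hμ0 n p.1) (Finset.prod_nonneg fun i _ => hW0 _ _)
  -- the key bound
  have key : ∀ n : ℕ, 0 < n → S n ≤ G n + K ^ 2 / ((ε' - ε) ^ 2 * n) := by
    intro n hn
    -- rewrite S n as a double sum
    have hmass : ∀ a : Fin n → A, ∑ b : Fin n → B, ∏ i, W (a i) (b i) = 1 := by
      intro a
      rw [← Fintype.piFinset_univ, ← Finset.prod_univ_sum]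
      simp [hW1]
    set inner : (Fin n → A) → ℝ := fun a =>
      ∑ b ∈ Finset.univ.filter (fun b : Fin n → B =>
          ε' < ∑ q : A × B,
            |(1 / (n : ℝ)) * (∑ i, if (a i, b i) = q then (1 : ℝ) else 0) - PAB q|),
        (∏ i, W (a i) (b i)) with hinner
    have hSrw : S n = ∑ a : Fin n → A, μ n a * inner a := by
      simp only [hS]
      rw [Finset.sum_filter, Fintype.sum_prod_type]
      apply Finset.sum_congr rfl
      intro a _
      simp only [hinner]
      rw [Finset.sum_filter, Finset.mul_sum]
      apply Finset.sum_congr rfl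
      intro b _
      rw [hν]
      simp only [mul_ite, mul_zero]
    have hinner0 : ∀ a, 0 ≤ inner a :=
      fun a => Finset.sum_nonneg fun b _ => Finset.prod_nonneg fun i _ => hW0 _ _
    have hinner1 : ∀ a, inner a ≤ 1 := by
      intro a
      simp only [hinner]
      rw [← hmass a]
      exact Finset.sum_le_sum_of_subset_of_nonneg (Finset.filter_subset _ _)
        (fun b _ _ => Finset.prod_nonneg fun i _ => hW0 _ _)
    rw [hSrw]
    rw [← Finset.sum_filter_add_sum_filter_not Finset.univ
      (fun a : Fin n → A =>
        ε < ∑ u, |(1 / (n : ℝ)) * (∑ i, if a i = u then (1 : ℝ) else 0) - PA u|)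
      (fun a => μ n a * inner a)]
    have hpart1 : ∑ a ∈ Finset.univ.filter
        (fun a : Fin n → A =>
          ε < ∑ u, |(1 / (n : ℝ)) * (∑ i, if a i = u then (1 : ℝ) else 0) - PA u|),
        μ n a * inner a ≤ G n := by
      rw [hG]
      apply Finset.sum_le_sum
      intro a _
      calc μ n a * inner a ≤ μ n a * 1 :=
            mul_le_mul_of_nonneg_left (hinner1 a) (hμ0 n a)
        _ = μ n a := mul_one _
    have hpart2 : ∑ a ∈ Finset.univ.filter
        (fun a : Fin n → A =>
          ¬ ε < ∑ u, |(1 / (n : ℝ)) * (∑ i, if a i = u then (1 : ℝ) else 0) - PA u|),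
        μ n a * inner a ≤ K ^ 2 / ((ε' - ε) ^ 2 * n) := by
      have hbound : (0:ℝ) ≤ K ^ 2 / ((ε' - ε) ^ 2 * n) := by positivity
      calc ∑ a ∈ Finset.univ.filter _, μ n a * inner a
          ≤ ∑ a ∈ Finset.univ.filter
              (fun a : Fin n → A =>
                ¬ ε < ∑ u, |(1 / (n : ℝ)) * (∑ i, if a i = u then (1 : ℝ) else 0) - PA u|),
              μ n a * (K ^ 2 / ((ε' - ε) ^ 2 * n)) := by
            apply Finset.sum_le_sum
            intro a ha
            rw [Finset.mem_filter, not_lt] at ha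
            exact mul_le_mul_of_nonneg_left
              (good_bound PA W hW0 hW1 PAB hPAB hn a hδ ha.2) (hμ0 n a)
        _ = (∑ a ∈ Finset.univ.filter _, μ n a) * (K ^ 2 / ((ε' - ε) ^ 2 * n)) := by
            rw [Finset.sum_mul]
        _ ≤ 1 * (K ^ 2 / ((ε' - ε) ^ 2 * n)) := by
            apply mul_le_mul_of_nonneg_right _ hbound
            rw [← hμ1 n]
            exact Finset.sum_le_sum_of_subset_of_nonneg (Finset.filter_subset _ _)
              (fun a _ _ => hμ0 n a)
        _ = K ^ 2 / ((ε' - ε) ^ 2 * n) := one_mul _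
    linarith
  -- squeeze
  have hlim2 : Tendsto (fun n : ℕ => G n + K ^ 2 / ((ε' - ε) ^ 2 * n)) atTop (nhds 0) := by
    have h1 : Tendsto (fun n : ℕ => K ^ 2 / ((ε' - ε) ^ 2 * n)) atTop (nhds 0) := by
      have : (fun n : ℕ => K ^ 2 / ((ε' - ε) ^ 2 * n))
          = fun n : ℕ => (K ^ 2 / (ε' - ε) ^ 2) * (1 / (n:ℝ)) := by
        funext n
        rw [div_mul_eq_div_div_swap]
        ring
      rw [this]
      have := tendsto_one_div_atTop_nhds_zero_nat.const_mul (K ^ 2 / (ε' - ε) ^ 2)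
      simpa using this
    have := h.add h1
    simpa using this
  refine tendsto_of_tendsto_of_tendsto_of_le_of_le' tendsto_const_nhds hlim2 ?_ ?_
  · exact Filter.Eventually.of_forall hS0
  · filter_upwards [Filter.eventually_gt_atTop 0] with n hn
    exact key n hn
end

section
/- Let Z be a finite alphabet and P a probability distribution on Z. For each n, let μ_n be a probability distribution on Z^n, and let P^{⊗n} denote the n-fold i.i.d. product of P on Z^n. If lim_{n→∞} 𝕍(μ_n, P^{⊗n}) = 0, then for every ε > 0, lim_{n→∞} μ_n{ z^{1:n} ∈ Z^n : 𝕍(T_{z^{1:n}}, P) > ε } = 0. -/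
open Finset Filter

section Aux

variable {Z : Type*} [Fintype Z] [DecidableEq Z] (P : Z → ℝ)

/-- Expectation of a one-coordinate function under the product distribution. -/
lemma expect_one (hP1 : ∑ z, P z = 1) {n : ℕ} (i : Fin n) (f : Z → ℝ) :
    ∑ z : Fin n → Z, (∏ k, P (z k)) * f (z i) = ∑ x, P x * f x := by
  have key : ∀ z : Fin n → Z,
      (∏ k, (P (z k) * if k = i then f (z k) else 1)) = (∏ k, P (z k)) * f (z i) := by
    intro z
    rw [Finset.prod_mul_distrib, Finset.prod_ite_eq']
    simp
  simp_rw [← key]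
  rw [← Fintype.prod_sum (fun k x => P x * if k = i then f x else 1)]
  have hsum : ∀ k : Fin n, (∑ x, P x * if k = i then f x else 1)
      = if k = i then ∑ x, P x * f x else 1 := by
    intro k
    split_ifs with hk <;> simp [hP1]
  simp_rw [hsum]
  rw [Finset.prod_ite_eq']
  simp

/-- Expectation of a two-distinct-coordinate product factorizes. -/
lemma expect_two (hP1 : ∑ z, P z = 1) {n : ℕ} {i j : Fin n} (hij : i ≠ j) (f g : Z → ℝ) :
    ∑ z : Fin n → Z, (∏ k, P (z k)) * (f (z i) * g (z j))
      = (∑ x, P x * f x) * (∑ x, P x * g x) := by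
  have key : ∀ z : Fin n → Z,
      (∏ k, (P (z k) * (if k = i then f (z k) else 1) * (if k = j then g (z k) else 1)))
        = (∏ k, P (z k)) * (f (z i) * g (z j)) := by
    intro z
    rw [Finset.prod_mul_distrib, Finset.prod_mul_distrib, Finset.prod_ite_eq',
      Finset.prod_ite_eq']
    simp [mul_assoc]
  simp_rw [← key]
  rw [← Fintype.prod_sum
    (fun k x => P x * (if k = i then f x else 1) * (if k = j then g x else 1))]
  have hsum : ∀ k : Fin n, (∑ x, P x * (if k = i then f x else 1) * (if k = j then g x else 1))
      = (if k = i then ∑ x, P x * f x else 1) * (if k = j then ∑ x, P x * g x else 1) := by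
    intro k
    split_ifs with h1 h2
    · exact absurd (h1.symm.trans h2) hij
    · simp
    · simp
    · simp [hP1]
  simp_rw [hsum]
  rw [Finset.prod_mul_distrib, Finset.prod_ite_eq', Finset.prod_ite_eq']
  simp

/-- Second moment bound for a centered bounded function. -/
lemma second_moment (hP0 : ∀ z, 0 ≤ P z) (hP1 : ∑ z, P z = 1) {n : ℕ} (f : Z → ℝ)
    (hf0 : ∑ x, P x * f x = 0) (hf1 : ∀ x, f x * f x ≤ 1) :
    ∑ z : Fin n → Z, (∏ k, P (z k)) * (∑ i, f (z i)) ^ 2 ≤ n := by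
  have expand : ∀ z : Fin n → Z, (∑ i, f (z i)) ^ 2 = ∑ i, ∑ j, f (z i) * f (z j) := by
    intro z; rw [sq, Finset.sum_mul_sum]
  calc ∑ z : Fin n → Z, (∏ k, P (z k)) * (∑ i, f (z i)) ^ 2
      = ∑ i : Fin n, ∑ j : Fin n, ∑ z : Fin n → Z, (∏ k, P (z k)) * (f (z i) * f (z j)) := by
        simp_rw [expand, Finset.mul_sum]
        rw [Finset.sum_comm]
        exact Finset.sum_congr rfl fun i _ => Finset.sum_comm
    _ = ∑ i : Fin n, ∑ j : Fin n, if i = j then ∑ x, P x * (f x * f x) else 0 := by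
        refine Finset.sum_congr rfl fun i _ => Finset.sum_congr rfl fun j _ => ?_
        by_cases hij : i = j
        · subst hij
          rw [if_pos rfl]
          exact expect_one P hP1 i (fun x => f x * f x)
        · rw [if_neg hij, expect_two P hP1 hij f f, hf0, zero_mul]
    _ ≤ ∑ i : Fin n, ∑ j : Fin n, if i = j then 1 else 0 := by
        refine Finset.sum_le_sum fun i _ => Finset.sum_le_sum fun j _ => ?_
        by_cases hij : i = j
        · simp only [if_pos hij]
          calc ∑ x, P x * (f x * f x) ≤ ∑ x, P x * 1 :=
                Finset.sum_le_sum fun x _ => mul_le_mul_of_nonneg_left (hf1 x) (hP0 x)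
            _ = 1 := by simp [hP1]
        · simp [hij]
    _ = n := by simp

/-- Chebyshev bound: probability under the product measure that the empirical frequency
of `a` deviates from `P a` by more than `δ`. -/
lemma chebyshev (hP0 : ∀ z, 0 ≤ P z) (hP1 : ∑ z, P z = 1) {n : ℕ} (hn : 1 ≤ n) (a : Z)
    {δ : ℝ} (hδ : 0 < δ) :
    ∑ z ∈ Finset.univ.filter
        (fun z : Fin n → Z =>
          δ < |(1 / (n : ℝ)) * (∑ i, if z i = a then (1 : ℝ) else 0) - P a|),
      (∏ k, P (z k)) ≤ 1 / (n * δ ^ 2) := by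
  have hn0 : (0 : ℝ) < n := by exact_mod_cast hn
  have hn0' : (n : ℝ) ≠ 0 := ne_of_gt hn0
  set f : Z → ℝ := fun x => (if x = a then 1 else 0) - P a with hf
  have hPa1 : P a ≤ 1 := hP1 ▸ Finset.single_le_sum (fun x _ => hP0 x) (mem_univ a)
  have hf0 : ∑ x, P x * f x = 0 := by
    simp only [hf, mul_sub, Finset.sum_sub_distrib, mul_ite, mul_one, mul_zero]
    rw [Finset.sum_ite_eq' univ a P, ← Finset.sum_mul, hP1]
    simp [mem_univ]
  have hf1 : ∀ x, f x * f x ≤ 1 := by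
    intro x
    have h1 : -1 ≤ f x ∧ f x ≤ 1 := by
      simp only [hf]
      split_ifs <;> constructor <;> linarith [hP0 a]
    nlinarith [h1.1, h1.2]
  have hM := second_moment P hP0 hP1 (n := n) f hf0 hf1
  -- rewrite deviation in terms of f
  have hdev : ∀ z : Fin n → Z,
      (1 / (n : ℝ)) * (∑ i, if z i = a then (1 : ℝ) else 0) - P a
        = (1 / (n : ℝ)) * ∑ i, f (z i) := by
    intro z
    simp only [hf, Finset.sum_sub_distrib, Finset.sum_const, card_univ, Fintype.card_fin,
      nsmul_eq_mul]
    field_simp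
  set B := Finset.univ.filter
      (fun z : Fin n → Z =>
        δ < |(1 / (n : ℝ)) * (∑ i, if z i = a then (1 : ℝ) else 0) - P a|) with hB
  have hkey : δ ^ 2 * ∑ z ∈ B, (∏ k, P (z k)) ≤ 1 / n := by
    have step1 : δ ^ 2 * ∑ z ∈ B, (∏ k, P (z k))
        ≤ ∑ z ∈ B, (∏ k, P (z k)) * ((1 / (n : ℝ)) * ∑ i, f (z i)) ^ 2 := by
      rw [Finset.mul_sum]
      refine Finset.sum_le_sum fun z hz => ?_
      have hzB : δ < |(1 / (n : ℝ)) * ∑ i, f (z i)| := by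
        have := (Finset.mem_filter.mp hz).2
        rwa [hdev z] at this
      have hsq : δ ^ 2 ≤ ((1 / (n : ℝ)) * ∑ i, f (z i)) ^ 2 := by
        have := abs_nonneg ((1 / (n : ℝ)) * ∑ i, f (z i))
        nlinarith [sq_abs ((1 / (n : ℝ)) * ∑ i, f (z i))]
      have hpn : 0 ≤ ∏ k, P (z k) := Finset.prod_nonneg fun k _ => hP0 _
      calc δ ^ 2 * ∏ k, P (z k) = (∏ k, P (z k)) * δ ^ 2 := mul_comm _ _
        _ ≤ (∏ k, P (z k)) * ((1 / (n : ℝ)) * ∑ i, f (z i)) ^ 2 :=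
            mul_le_mul_of_nonneg_left hsq hpn
    have step2 : ∑ z ∈ B, (∏ k, P (z k)) * ((1 / (n : ℝ)) * ∑ i, f (z i)) ^ 2
        ≤ ∑ z : Fin n → Z, (∏ k, P (z k)) * ((1 / (n : ℝ)) * ∑ i, f (z i)) ^ 2 := by
      refine Finset.sum_le_sum_of_subset_of_nonneg (Finset.filter_subset _ _) fun z _ _ => ?_
      have hpn : 0 ≤ ∏ k, P (z k) := Finset.prod_nonneg fun k _ => hP0 _
      positivity
    have step3 : ∑ z : Fin n → Z, (∏ k, P (z k)) * ((1 / (n : ℝ)) * ∑ i, f (z i)) ^ 2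
        ≤ 1 / (n : ℝ) := by
      have : ∀ z : Fin n → Z,
          (∏ k, P (z k)) * ((1 / (n : ℝ)) * ∑ i, f (z i)) ^ 2
            = (1 / (n : ℝ) ^ 2) * ((∏ k, P (z k)) * (∑ i, f (z i)) ^ 2) := by
        intro z; ring
      simp_rw [this]
      rw [← Finset.mul_sum]
      calc (1 / (n : ℝ) ^ 2) * ∑ z : Fin n → Z, (∏ k, P (z k)) * (∑ i, f (z i)) ^ 2
          ≤ (1 / (n : ℝ) ^ 2) * (n : ℝ) :=
            mul_le_mul_of_nonneg_left hM (by positivity)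
        _ = 1 / (n : ℝ) := by field_simp
    linarith
  rw [le_div_iff₀ (by positivity)]
  have h2 : (n : ℝ) * (1 / n) = 1 := by field_simp
  nlinarith [hkey, hn0, Finset.sum_nonneg fun z (_ : z ∈ B) => Finset.prod_nonneg
    fun k (_ : k ∈ univ) => hP0 (z k)]

end Aux

/-- If the variational distance between `μ_n` and the `n`-fold i.i.d.
product `P^{⊗n}` tends to zero, then for every `ε > 0` the `μ_n`-probability that the
empirical distribution of `z^{1:n}` is more than `ε` away from `P` tends to zero. -/
theorem close_to_iid_implies_typical
    {Z : Type*} [Fintype Z] [DecidableEq Z]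
    (P : Z → ℝ) (hP0 : ∀ z, 0 ≤ P z) (hP1 : ∑ z, P z = 1)
    (μ : (n : ℕ) → (Fin n → Z) → ℝ)
    (hμ0 : ∀ n z, 0 ≤ μ n z) (hμ1 : ∀ n, ∑ z, μ n z = 1)
    (h : Tendsto (fun n => ∑ z : Fin n → Z, |μ n z - ∏ i, P (z i)|) atTop (nhds 0)) :
    ∀ ε > (0 : ℝ), Tendsto
      (fun n => ∑ z ∈ Finset.univ.filter
        (fun z : Fin n → Z =>
          ε < ∑ a, |(1 / (n : ℝ)) * (∑ i, if z i = a then (1 : ℝ) else 0) - P a|),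
        μ n z)
      atTop (nhds 0) := by
  intro ε hε
  have hne : Nonempty Z := by
    rcases isEmpty_or_nonempty Z with hZ | hZ
    · rw [Finset.univ_eq_empty, Finset.sum_empty] at hP1; norm_num at hP1
    · exact hZ
  set c : ℝ := (Fintype.card Z : ℝ) with hc
  have hc0 : 0 < c := by
    rw [hc]
    exact_mod_cast Fintype.card_pos (α := Z)
  set δ : ℝ := ε / c with hδdef
  have hδ : 0 < δ := div_pos hε hc0
  apply squeeze_zero' (g := fun n =>
    (∑ z : Fin n → Z, |μ n z - ∏ i, P (z i)|) + (c / δ ^ 2) * (1 / n))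
  · filter_upwards with n
    exact Finset.sum_nonneg fun z _ => hμ0 n z
  · filter_upwards [eventually_ge_atTop 1] with n hn
    set T : (Fin n → Z) → Z → ℝ :=
      fun z a => (1 / (n : ℝ)) * (∑ i, if z i = a then (1 : ℝ) else 0) with hT
    set B := Finset.univ.filter (fun z : Fin n → Z => ε < ∑ a, |T z a - P a|) with hB
    -- step 1: replace μ by the product measure
    have step1 : ∑ z ∈ B, μ n z
        ≤ (∑ z : Fin n → Z, |μ n z - ∏ i, P (z i)|) + ∑ z ∈ B, (∏ i, P (z i)) := by
      have : ∑ z ∈ B, μ n z - ∑ z ∈ B, (∏ i, P (z i))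
          ≤ ∑ z : Fin n → Z, |μ n z - ∏ i, P (z i)| := by
        rw [← Finset.sum_sub_distrib]
        calc ∑ z ∈ B, (μ n z - ∏ i, P (z i)) ≤ ∑ z ∈ B, |μ n z - ∏ i, P (z i)| :=
              Finset.sum_le_sum fun z _ => le_abs_self _
          _ ≤ ∑ z : Fin n → Z, |μ n z - ∏ i, P (z i)| :=
              Finset.sum_le_sum_of_subset_of_nonneg (Finset.filter_subset _ _)
                fun z _ _ => abs_nonneg _
      linarith
    -- step 2: union bound for the product measure
    have step2 : ∑ z ∈ B, (∏ i, P (z i)) ≤ (c / δ ^ 2) * (1 / n) := by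
      have pick : ∀ z ∈ B, ∃ a : Z, δ < |T z a - P a| := by
        intro z hz
        by_contra hcon
        push_neg at hcon
        have hle : ∑ a, |T z a - P a| ≤ ∑ _a : Z, δ :=
          Finset.sum_le_sum fun a _ => hcon a
        have : ∑ _a : Z, δ = c * δ := by
          rw [Finset.sum_const, card_univ, nsmul_eq_mul, hc]
        have hcd : c * δ = ε := by
          rw [hδdef]; field_simp
        have hzB := (Finset.mem_filter.mp hz).2
        rw [this, hcd] at hle
        linarith
      have hub : ∑ z ∈ B, (∏ i, P (z i))
          ≤ ∑ a : Z, ∑ z ∈ Finset.univ.filter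
              (fun z : Fin n → Z => δ < |T z a - P a|), (∏ i, P (z i)) := by
        calc ∑ z ∈ B, (∏ i, P (z i))
            ≤ ∑ z ∈ B, ∑ a : Z, (if δ < |T z a - P a| then (∏ i, P (z i)) else 0) := by
              refine Finset.sum_le_sum fun z hz => ?_
              obtain ⟨a, ha⟩ := pick z hz
              have hpn : 0 ≤ ∏ i, P (z i) := Finset.prod_nonneg fun i _ => hP0 _
              calc (∏ i, P (z i)) = (if δ < |T z a - P a| then (∏ i, P (z i)) else 0) := by
                    rw [if_pos ha]
                _ ≤ ∑ a : Z, (if δ < |T z a - P a| then (∏ i, P (z i)) else 0) := by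
                    refine Finset.single_le_sum (f := fun b =>
                      if δ < |T z b - P b| then (∏ i, P (z i)) else 0)
                      (fun b _ => ?_) (mem_univ a)
                    split_ifs
                    · exact hpn
                    · exact le_refl 0
          _ = ∑ a : Z, ∑ z ∈ B, (if δ < |T z a - P a| then (∏ i, P (z i)) else 0) :=
              Finset.sum_comm
          _ ≤ ∑ a : Z, ∑ z : Fin n → Z, (if δ < |T z a - P a| then (∏ i, P (z i)) else 0) := by
              refine Finset.sum_le_sum fun a _ => ?_
              refine Finset.sum_le_sum_of_subset_of_nonneg (Finset.filter_subset _ _)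
                fun z _ _ => ?_
              split_ifs
              · exact Finset.prod_nonneg fun i _ => hP0 _
              · exact le_refl 0
          _ = ∑ a : Z, ∑ z ∈ Finset.univ.filter
                (fun z : Fin n → Z => δ < |T z a - P a|), (∏ i, P (z i)) := by
              refine Finset.sum_congr rfl fun a _ => ?_
              rw [Finset.sum_filter]
      have hcheb : ∀ a : Z, ∑ z ∈ Finset.univ.filter
          (fun z : Fin n → Z => δ < |T z a - P a|), (∏ i, P (z i)) ≤ 1 / (n * δ ^ 2) :=
        fun a => chebyshev P hP0 hP1 hn a hδ
      calc ∑ z ∈ B, (∏ i, P (z i))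
          ≤ ∑ a : Z, ∑ z ∈ Finset.univ.filter
              (fun z : Fin n → Z => δ < |T z a - P a|), (∏ i, P (z i)) := hub
        _ ≤ ∑ _a : Z, 1 / ((n : ℝ) * δ ^ 2) := Finset.sum_le_sum fun a _ => hcheb a
        _ = c * (1 / ((n : ℝ) * δ ^ 2)) := by
            rw [Finset.sum_const, card_univ, nsmul_eq_mul, hc]
        _ = (c / δ ^ 2) * (1 / n) := by
            rw [one_div, one_div, mul_inv, div_eq_mul_inv]
            ring
    calc ∑ z ∈ B, μ n z
        ≤ (∑ z : Fin n → Z, |μ n z - ∏ i, P (z i)|) + ∑ z ∈ B, (∏ i, P (z i)) := step1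
      _ ≤ (∑ z : Fin n → Z, |μ n z - ∏ i, P (z i)|) + (c / δ ^ 2) * (1 / n) := by
          linarith [step2]
  · have h2 : Tendsto (fun n : ℕ => (c / δ ^ 2) * (1 / (n : ℝ))) atTop (nhds 0) := by
      simpa using tendsto_one_div_atTop_nhds_zero_nat.const_mul (c / δ ^ 2)
    simpa using h.add h2
end

section
/- Let S be a finite alphabet, n ≥ 1, δ > 0, and let P be a probability distribution on {0,1}^n × S^n with full support, with S-marginal P_S. Let A ⊆ [1,n] and define Q on {0,1}^n × S^n by Q(v^{1:n}, s^{1:n}) = P_S(s^{1:n}) · Π_{j=1}^n q_j(v^j | v^{1:j−1}, s^{1:n}), where q_j is uniform on {0,1} for j ∈ A and equals the conditional distribution P(V^j = · | V^{1:j−1}, S^{1:n}) under P for j ∉ A. If H(V^j | V^{1:j−1}, S^{1:n}) > 1 − δ (conditional Shannon entropy in bits under P) for every j ∈ A, then D(P ‖ Q) ≤ |A|·δ ≤ n·δ, and consequently the variational distance satisfies 𝕍(P, Q) ≤ √(2 log 2) · √(n δ). -/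
open Finset Real Set

section aux

lemma aux_logsum {α : Type*} (s : Finset α) (f g : α → ℝ)
    (hf : ∀ z ∈ s, 0 < f z) (hg : ∀ z ∈ s, 0 < g z) (hs : s.Nonempty) :
    (∑ z ∈ s, f z) * Real.log ((∑ z ∈ s, f z) / (∑ z ∈ s, g z)) ≤
      ∑ z ∈ s, f z * Real.log (f z / g z) := by
  set F := ∑ z ∈ s, f z with hF
  set G := ∑ z ∈ s, g z with hG
  have hFpos : 0 < F := Finset.sum_pos hf hs
  have hGpos : 0 < G := Finset.sum_pos hg hs
  set t := F / G with ht
  have htpos : 0 < t := div_pos hFpos hGpos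
  -- pointwise: f z * (log (f z / g z) - log t) ≥ f z - g z * t
  have key : ∀ z ∈ s, f z - g z * t ≤ f z * (Real.log (f z / g z) - Real.log t) := by
    intro z hz
    have hfz := hf z hz
    have hgz := hg z hz
    have hx : 0 < g z * t / f z := by positivity
    have hlog := Real.log_le_sub_one_of_pos hx
    have hrw : Real.log (g z * t / f z) = -(Real.log (f z / g z) - Real.log t) := by
      rw [Real.log_div (by positivity) hfz.ne', Real.log_mul hgz.ne' htpos.ne',
        Real.log_div hfz.ne' hgz.ne']
      ring
    rw [hrw] at hlog
    have := mul_le_mul_of_nonneg_left hlog hfz.le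
    have heq : f z * (g z * t / f z - 1) = g z * t - f z := by field_simp
    nlinarith [this]
  have hsum := Finset.sum_le_sum key
  have h1 : ∑ z ∈ s, (f z - g z * t) = F - G * t := by
    rw [Finset.sum_sub_distrib, ← Finset.sum_mul]
  have h2 : ∑ z ∈ s, f z * (Real.log (f z / g z) - Real.log t) =
      (∑ z ∈ s, f z * Real.log (f z / g z)) - F * Real.log t := by
    simp only [mul_sub]
    rw [Finset.sum_sub_distrib, ← Finset.sum_mul]
  rw [h1, h2] at hsum
  have hGt : G * t = F := by rw [ht]; field_simp
  rw [hGt] at hsum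
  linarith

lemma aux_binary_pinsker {p q : ℝ} (hq : 0 < q) (hqp : q ≤ p) (hp : p < 1) :
    2 * (p - q) ^ 2 ≤ p * Real.log (p / q) + (1 - p) * Real.log ((1 - p) / (1 - q)) := by
  have hq1 : q < 1 := lt_of_le_of_lt hqp hp
  rcases eq_or_lt_of_le hqp with rfl | hlt
  · simp [Real.log_div, hq.ne', (by linarith : (0:ℝ) < 1 - q).ne']
  -- g and its monotonicity on [q,p]
  set g : ℝ → ℝ := fun r => Real.log r - Real.log (1 - r) - 4 * r with hgdef
  have hgderiv : ∀ r ∈ Icc q p, HasDerivAt g (r⁻¹ + (1 - r)⁻¹ - 4) r := by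
    intro r hr
    have hr0 : 0 < r := lt_of_lt_of_le hq hr.1
    have hr1 : r < 1 := lt_of_le_of_lt hr.2 hp
    have h1 : HasDerivAt (fun r : ℝ => Real.log r) r⁻¹ r := Real.hasDerivAt_log hr0.ne'
    have hin : HasDerivAt (fun r : ℝ => 1 - r) (-1) r := (hasDerivAt_id r).const_sub 1
    have h2 : HasDerivAt (fun r : ℝ => Real.log (1 - r)) ((1 - r)⁻¹ * (-1)) r :=
      (Real.hasDerivAt_log (by linarith)).comp r hin
    have h3 : HasDerivAt (fun r : ℝ => 4 * r) 4 r := by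
      simpa using (hasDerivAt_id r).const_mul 4
    have := (h1.sub h2).sub h3
    refine this.congr_deriv ?_
    ring
  have hgmono : MonotoneOn g (Icc q p) := by
    apply monotoneOn_of_deriv_nonneg (convex_Icc q p)
    · exact fun r hr => ((hgderiv r hr).continuousAt).continuousWithinAt
    · intro r hr
      rw [interior_Icc] at hr
      exact ((hgderiv r (Ioo_subset_Icc_self hr)).differentiableAt).differentiableWithinAt
    · intro r hr
      rw [interior_Icc] at hr
      have hr' := Ioo_subset_Icc_self hr
      rw [(hgderiv r hr').deriv]
      have hr0 : 0 < r := lt_of_lt_of_le hq hr'.1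
      have hr1 : 0 < 1 - r := by have := lt_of_le_of_lt hr'.2 hp; linarith
      have h4 : 4 * (r * (1 - r)) ≤ 1 := by nlinarith [sq_nonneg (2 * r - 1)]
      have : (4:ℝ) ≤ r⁻¹ + (1 - r)⁻¹ := by
        rw [inv_eq_one_div, inv_eq_one_div, div_add_div _ _ hr0.ne' hr1.ne',
          le_div_iff₀ (by positivity)]
        nlinarith
      linarith
  -- f and its monotonicity
  set f : ℝ → ℝ := fun r =>
    r * (Real.log r - Real.log q) + (1 - r) * (Real.log (1 - r) - Real.log (1 - q))
      - 2 * (r - q) ^ 2 with hfdef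
  have hfderiv : ∀ r ∈ Icc q p, HasDerivAt f (g r - g q) r := by
    intro r hr
    have hr0 : 0 < r := lt_of_lt_of_le hq hr.1
    have hr1 : (0:ℝ) < 1 - r := by have := lt_of_le_of_lt hr.2 hp; linarith
    have t1 : HasDerivAt (fun r : ℝ => r * (Real.log r - Real.log q))
        (1 * (Real.log r - Real.log q) + r * r⁻¹) r :=
      (hasDerivAt_id r).mul ((Real.hasDerivAt_log hr0.ne').sub_const _)
    have hin : HasDerivAt (fun r : ℝ => 1 - r) (-1) r := (hasDerivAt_id r).const_sub 1
    have h2 : HasDerivAt (fun r : ℝ => Real.log (1 - r)) ((1 - r)⁻¹ * (-1)) r :=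
      (Real.hasDerivAt_log hr1.ne').comp r hin
    have t2 : HasDerivAt (fun r : ℝ => (1 - r) * (Real.log (1 - r) - Real.log (1 - q)))
        ((-1) * (Real.log (1 - r) - Real.log (1 - q)) + (1 - r) * ((1 - r)⁻¹ * (-1))) r :=
      ((hasDerivAt_id r).const_sub 1).mul (h2.sub_const _)
    have t3 : HasDerivAt (fun r : ℝ => 2 * (r - q) ^ 2)
        (2 * ((2 : ℕ) * (r - q) ^ 1 * 1)) r :=
      (((hasDerivAt_id r).sub_const q).pow 2).const_mul 2
    have := (t1.add t2).sub t3
    refine this.congr_deriv ?_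
    simp only [hgdef]
    field_simp
    ring
  have hfmono : MonotoneOn f (Icc q p) := by
    apply monotoneOn_of_deriv_nonneg (convex_Icc q p)
    · exact fun r hr => ((hfderiv r hr).continuousAt).continuousWithinAt
    · intro r hr
      rw [interior_Icc] at hr
      exact ((hfderiv r (Ioo_subset_Icc_self hr)).differentiableAt).differentiableWithinAt
    · intro r hr
      rw [interior_Icc] at hr
      have hr' := Ioo_subset_Icc_self hr
      rw [(hfderiv r hr').deriv]
      have := hgmono (left_mem_Icc.2 hqp) hr' hr'.1
      linarith
  have h0 : f q = 0 := by simp [hfdef]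
  have hfp : 0 ≤ f p := by
    have := hfmono (left_mem_Icc.2 hqp) (right_mem_Icc.2 hqp) hqp
    linarith
  have hlog1 : Real.log (p / q) = Real.log p - Real.log q :=
    Real.log_div (by linarith) hq.ne'
  have hlog2 : Real.log ((1 - p) / (1 - q)) = Real.log (1 - p) - Real.log (1 - q) :=
    Real.log_div (by linarith) (by linarith)
  rw [hlog1, hlog2]
  simp only [hfdef] at hfp
  linarith

lemma aux_pinsker {α : Type*} [Fintype α] (P Q : α → ℝ)
    (hP : ∀ z, 0 < P z) (hQ : ∀ z, 0 < Q z)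
    (hP1 : ∑ z, P z = 1) (hQ1 : ∑ z, Q z = 1) :
    ∑ z, |P z - Q z| ≤ Real.sqrt (2 * ∑ z, P z * Real.log (P z / Q z)) := by
  classical
  set E : Finset α := univ.filter (fun z => Q z < P z) with hE
  rcases E.eq_empty_or_nonempty with hEe | hEne
  · -- P ≤ Q pointwise, equal sums ⇒ P = Q
    have hle : ∀ z, P z ≤ Q z := by
      intro z
      by_contra h
      exact (Finset.eq_empty_iff_forall_notMem.1 hEe z)
        (Finset.mem_filter.2 ⟨Finset.mem_univ z, not_le.1 h⟩)
    have heq : ∀ z ∈ (univ : Finset α), Q z - P z = 0 := by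
      rw [← Finset.sum_eq_zero_iff_of_nonneg (fun z _ => sub_nonneg.2 (hle z))]
      rw [Finset.sum_sub_distrib, hP1, hQ1, sub_self]
    have : ∑ z, |P z - Q z| = 0 :=
      Finset.sum_eq_zero fun z _ => by
        have := heq z (Finset.mem_univ z); rw [abs_eq_zero]; linarith
    rw [this]
    exact Real.sqrt_nonneg _
  · set Ec : Finset α := univ.filter (fun z => ¬ Q z < P z) with hEc
    have hEcne : Ec.Nonempty := by
      rw [Finset.filter_nonempty_iff]
      by_contra h
      push_neg at h
      have : ∑ z, Q z < ∑ z, P z :=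
        Finset.sum_lt_sum_of_nonempty (univ_nonempty_iff.2 ⟨hEne.choose⟩)
          (fun z _ => h z (Finset.mem_univ z))
      rw [hP1, hQ1] at this; exact lt_irrefl _ this
    set p := ∑ z ∈ E, P z with hp
    set q := ∑ z ∈ E, Q z with hq
    have hsplitP : p + ∑ z ∈ Ec, P z = 1 := by
      rw [hp, hEc, hE, Finset.sum_filter_add_sum_filter_not, hP1]
    have hsplitQ : q + ∑ z ∈ Ec, Q z = 1 := by
      rw [hq, hEc, hE, Finset.sum_filter_add_sum_filter_not, hQ1]
    have hqpos : 0 < q := Finset.sum_pos (fun z _ => hQ z) hEne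
    have hqp : q < p :=
      Finset.sum_lt_sum_of_nonempty hEne (fun z hz => (Finset.mem_filter.1 hz).2)
    have hEcP : 0 < ∑ z ∈ Ec, P z := Finset.sum_pos (fun z _ => hP z) hEcne
    have hEcQ : 0 < ∑ z ∈ Ec, Q z := Finset.sum_pos (fun z _ => hQ z) hEcne
    have hp1 : p < 1 := by linarith
    have hEcPv : ∑ z ∈ Ec, P z = 1 - p := by linarith
    have hEcQv : ∑ z ∈ Ec, Q z = 1 - q := by linarith
    -- variational distance
    have hV : ∑ z, |P z - Q z| = 2 * (p - q) := by
      rw [← Finset.sum_filter_add_sum_filter_not univ (fun z => Q z < P z)]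
      have h1 : ∑ z ∈ E, |P z - Q z| = ∑ z ∈ E, (P z - Q z) :=
        Finset.sum_congr rfl fun z hz =>
          abs_of_pos (sub_pos.2 (Finset.mem_filter.1 hz).2)
      have h2 : ∑ z ∈ Ec, |P z - Q z| = ∑ z ∈ Ec, (Q z - P z) :=
        Finset.sum_congr rfl fun z hz => by
          rw [abs_sub_comm]
          exact abs_of_nonneg (sub_nonneg.2 (not_lt.1 (Finset.mem_filter.1 hz).2))
      rw [show (univ.filter fun z => Q z < P z) = E from rfl, h1, h2,
        Finset.sum_sub_distrib, Finset.sum_sub_distrib, hEcPv, hEcQv]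
      ring
    -- KL lower bound
    have hKL1 : p * Real.log (p / q) ≤ ∑ z ∈ E, P z * Real.log (P z / Q z) :=
      aux_logsum E P Q (fun z _ => hP z) (fun z _ => hQ z) hEne
    have hKL2 : (1 - p) * Real.log ((1 - p) / (1 - q)) ≤
        ∑ z ∈ Ec, P z * Real.log (P z / Q z) := by
      have := aux_logsum Ec P Q (fun z _ => hP z) (fun z _ => hQ z) hEcne
      rwa [hEcPv, hEcQv] at this
    have hbin := aux_binary_pinsker hqpos hqp.le hp1
    have hD : 2 * (p - q) ^ 2 ≤ ∑ z, P z * Real.log (P z / Q z) := by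
      rw [← Finset.sum_filter_add_sum_filter_not univ (fun z => Q z < P z)]
      calc 2 * (p - q) ^ 2 ≤ p * Real.log (p / q) + (1 - p) * Real.log ((1 - p) / (1 - q)) :=
            hbin
        _ ≤ _ := add_le_add hKL1 hKL2
    rw [hV]
    apply Real.le_sqrt_of_sq_le
    nlinarith [hD]

lemma aux_step {n : ℕ} (m : Fin n) (F : (Fin n → Bool) → ℝ) (g : Bool → (Fin n → Bool) → ℝ)
    (hF : ∀ v b, F (Function.update v m b) = F v)
    (hg : ∀ c v b, g c (Function.update v m b) = g c v)
    (hsum : ∀ v, g false v + g true v = 1) :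
    ∑ v, F v * g (v m) v = (∑ v, F v) / 2 := by
  classical
  set e := Equiv.funSplitAt m Bool with he
  have hupd : ∀ (b c : Bool) (w : { j // j ≠ m } → Bool),
      e.symm (b, w) = Function.update (e.symm (c, w)) m b := by
    intro b c w
    funext i
    by_cases hi : i = m
    · subst hi
      simp [he, Equiv.funSplitAt, Equiv.piSplitAt, Function.update_self]
    · simp [he, Equiv.funSplitAt, Equiv.piSplitAt, hi, Function.update_of_ne hi]
  have hm : ∀ (b : Bool) (w : { j // j ≠ m } → Bool), e.symm (b, w) m = b := by
    intro b w
    simp [he, Equiv.funSplitAt, Equiv.piSplitAt]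
  have key : ∀ (G : (Fin n → Bool) → ℝ),
      ∑ v, G v = ∑ w : { j // j ≠ m } → Bool, (G (e.symm (false, w)) + G (e.symm (true, w))) := by
    intro G
    rw [← Equiv.sum_comp e.symm G, Fintype.sum_prod_type_right]
    congr 1
    funext w
    simp [Fintype.sum_bool, add_comm]
  rw [key (fun v => F v * g (v m) v), key F]
  rw [Finset.sum_div]
  congr 1
  funext w
  have h1 : F (e.symm (true, w)) = F (e.symm (false, w)) := by
    rw [hupd true false w, hF]
  have h2 : ∀ c, g c (e.symm (true, w)) = g c (e.symm (false, w)) := by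
    intro c; rw [hupd true false w, hg]
  rw [hm, hm, h1, h2]
  have := hsum (e.symm (false, w))
  set x := F (e.symm (false, w))
  set a := g false (e.symm (false, w))
  set b := g true (e.symm (false, w))
  field_simp
  linear_combination 2 * x * this

lemma aux_sum_prod {n : ℕ} (g : Fin n → Bool → (Fin n → Bool) → ℝ)
    (hdep : ∀ (j : Fin n) b v w, (∀ i, i < j → v i = w i) → g j b v = g j b w)
    (hsum : ∀ j v, g j false v + g j true v = 1) (T : Finset (Fin n)) :
    ∑ v, ∏ j ∈ T, g j (v j) v = 2 ^ n / 2 ^ T.card := by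
  classical
  induction T using Finset.induction_on_max with
  | empty =>
    simp only [Finset.prod_empty, Finset.card_empty, pow_zero, div_one]
    rw [Finset.sum_const, Finset.card_univ]
    simp [Fintype.card_fun]
  | insert m T hT ih =>
    have hmT : m ∉ T := fun h => lt_irrefl m (hT m h)
    have hFinv : ∀ v b, (∏ j ∈ T, g j ((Function.update v m b) j) (Function.update v m b))
        = ∏ j ∈ T, g j (v j) v := by
      intro v b
      apply Finset.prod_congr rfl
      intro j hj
      have hjm : j ≠ m := ne_of_lt (hT j hj)
      rw [Function.update_of_ne hjm]
      exact hdep j (v j) _ v (fun i hi =>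
        Function.update_of_ne (ne_of_lt (lt_trans hi (hT j hj))) _ _)
    have hginv : ∀ c v b, g m c (Function.update v m b) = g m c v := by
      intro c v b
      exact hdep m c _ v (fun i hi => Function.update_of_ne (ne_of_lt hi) _ _)
    have := aux_step m (fun v => ∏ j ∈ T, g j (v j) v) (g m) hFinv hginv (hsum m)
    calc ∑ v, ∏ j ∈ insert m T, g j (v j) v
        = ∑ v, (∏ j ∈ T, g j (v j) v) * g m (v m) v := by
          apply Finset.sum_congr rfl
          intro v _
          rw [Finset.prod_insert hmT, mul_comm]
      _ = (∑ v, ∏ j ∈ T, g j (v j) v) / 2 := this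
      _ = 2 ^ n / 2 ^ (insert m T).card := by
          rw [ih, Finset.card_insert_of_notMem hmT, pow_succ]
          ring

section condlemmas
variable {n : ℕ} {σ : Type*} [Fintype σ]
  (P : (Fin n → Bool) × (Fin n → σ) → ℝ)
  (condP : Fin n → Bool → (Fin n → Bool) → (Fin n → σ) → ℝ)

lemma aux_den_pos (hPpos : ∀ z, 0 < P z) (j : Fin n) (v : Fin n → Bool) (s : Fin n → σ) :
    0 < ∑ w ∈ Finset.univ.filter
        (fun w : Fin n → Bool => ∀ i, i < j → w i = v i), P (w, s) := by
  classical
  apply Finset.sum_pos (fun w _ => hPpos _)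
  exact ⟨v, Finset.mem_filter.2 ⟨Finset.mem_univ v, fun i _ => rfl⟩⟩

lemma aux_num_pos (hPpos : ∀ z, 0 < P z) (j : Fin n) (b : Bool) (v : Fin n → Bool)
    (s : Fin n → σ) :
    0 < ∑ w ∈ Finset.univ.filter
        (fun w : Fin n → Bool => (∀ i, i < j → w i = v i) ∧ w j = b), P (w, s) := by
  classical
  apply Finset.sum_pos (fun w _ => hPpos _)
  refine ⟨Function.update v j b, Finset.mem_filter.2 ⟨Finset.mem_univ _, ⟨?_, ?_⟩⟩⟩
  · exact fun i hi => Function.update_of_ne (ne_of_lt hi) _ _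
  · exact Function.update_self _ _ _

variable (hPpos : ∀ z, 0 < P z)
  (hcondP : ∀ j b v s, condP j b v s =
      (∑ w ∈ Finset.univ.filter
          (fun w : Fin n → Bool => (∀ i, i < j → w i = v i) ∧ w j = b), P (w, s)) /
      (∑ w ∈ Finset.univ.filter
          (fun w : Fin n → Bool => ∀ i, i < j → w i = v i), P (w, s)))

include hPpos hcondP

lemma aux_cond_pos (j : Fin n) (b : Bool) (v : Fin n → Bool) (s : Fin n → σ) :
    0 < condP j b v s := by
  rw [hcondP]
  exact div_pos (aux_num_pos P hPpos j b v s) (aux_den_pos P hPpos j v s)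

lemma aux_cond_sum (j : Fin n) (v : Fin n → Bool) (s : Fin n → σ) :
    condP j false v s + condP j true v s = 1 := by
  classical
  rw [hcondP, hcondP, ← add_div, div_eq_one_iff_eq (aux_den_pos P hPpos j v s).ne']
  rw [Finset.sum_filter, Finset.sum_filter, Finset.sum_filter, ← Finset.sum_add_distrib]
  apply Finset.sum_congr rfl
  intro w _
  by_cases h1 : ∀ i, i < j → w i = v i
  · cases hwj : w j <;> simp [h1, hwj]
  · simp [h1]

lemma aux_cond_dep (j : Fin n) (b : Bool) (v w : Fin n → Bool) (s : Fin n → σ)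
    (hvw : ∀ i, i < j → v i = w i) :
    condP j b v s = condP j b w s := by
  classical
  rw [hcondP, hcondP]
  congr 1
  · apply Finset.sum_congr _ (fun _ _ => rfl)
    apply Finset.filter_congr
    intro u _
    constructor
    · rintro ⟨h1, h2⟩; exact ⟨fun i hi => (h1 i hi).trans (hvw i hi), h2⟩
    · rintro ⟨h1, h2⟩; exact ⟨fun i hi => (h1 i hi).trans (hvw i hi).symm, h2⟩
  · apply Finset.sum_congr _ (fun _ _ => rfl)
    apply Finset.filter_congr
    intro u _
    constructor
    · exact fun h1 i hi => (h1 i hi).trans (hvw i hi)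
    · exact fun h1 i hi => (h1 i hi).trans (hvw i hi).symm

lemma aux_chain (v : Fin n → Bool) (s : Fin n → σ) :
    P (v, s) = (∑ w, P (w, s)) * ∏ j, condP j (v j) v s := by
  classical
  set Dk : ℕ → ℝ := fun k => ∑ w ∈ Finset.univ.filter
      (fun w : Fin n → Bool => ∀ i : Fin n, (i : ℕ) < k → w i = v i), P (w, s) with hDk
  have hD0 : Dk 0 = ∑ w, P (w, s) := by
    simp [hDk]
  have hDn : Dk n = P (v, s) := by
    have : Finset.univ.filter
        (fun w : Fin n → Bool => ∀ i : Fin n, (i : ℕ) < n → w i = v i) = {v} := by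
      ext w
      simp only [Finset.mem_filter, Finset.mem_univ, true_and, Finset.mem_singleton]
      constructor
      · intro h; funext i; exact h i i.isLt
      · rintro rfl; exact fun i _ => rfl
    rw [hDk]
    simp only [this, Finset.sum_singleton]
  set fN : ℕ → ℝ := fun k => if h : k < n then condP ⟨k, h⟩ (v ⟨k, h⟩) v s else 1 with hfN
  have hstep : ∀ k (hk : k < n), Dk (k + 1) = Dk k * fN k := by
    intro k hk
    set j : Fin n := ⟨k, hk⟩ with hj
    have hden : (∑ w ∈ Finset.univ.filter
        (fun w : Fin n → Bool => ∀ i, i < j → w i = v i), P (w, s)) = Dk k := by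
      rw [hDk]
      apply Finset.sum_congr _ (fun _ _ => rfl)
      apply Finset.filter_congr
      intro w _
      simp only [hj, Fin.lt_def]
    have hnum : (∑ w ∈ Finset.univ.filter
        (fun w : Fin n → Bool => (∀ i, i < j → w i = v i) ∧ w j = v j), P (w, s))
        = Dk (k + 1) := by
      rw [hDk]
      apply Finset.sum_congr _ (fun _ _ => rfl)
      apply Finset.filter_congr
      intro w _
      simp only [hj, Fin.lt_def]
      constructor
      · rintro ⟨h1, h2⟩ i hi
        rcases Nat.lt_or_ge (i : ℕ) k with h | h
        · exact h1 i h
        · have : (i : ℕ) = k := by omega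
          have : i = ⟨k, hk⟩ := Fin.ext this
          rw [this]; exact h2
      · intro h
        exact ⟨fun i hi => h i (by omega), h ⟨k, hk⟩ (by simp)⟩
    have hfNk : fN k = condP j (v j) v s := dif_pos hk
    rw [hfNk, hcondP, hden, hnum]
    have hDkpos : 0 < Dk k := by
      rw [← hden]; exact aux_den_pos P hPpos j v s
    field_simp
  have hind : ∀ m, m ≤ n → Dk m = Dk 0 * ∏ k ∈ Finset.range m, fN k := by
    intro m
    induction m with
    | zero => intro _; simp
    | succ m ih =>
      intro hm
      rw [hstep m (by omega), ih (by omega), Finset.prod_range_succ, mul_assoc]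
  have := hind n le_rfl
  rw [hDn, hD0] at this
  rw [this]
  congr 1
  rw [← Fin.prod_univ_eq_prod_range fN n]
  apply Finset.prod_congr rfl
  intro j _
  rw [hfN]
  simp

end condlemmas

end aux

open Finset



open Finset

/-- In the setting of the polar-encoding distribution: `P` is a
full-support distribution on `{0,1}ⁿ × Sⁿ` with `S`-marginal `P_S`, and `Q` keeps `P_S` and
the true successive conditionals `P(V^j | V^{1:j-1}, S^{1:n})` for `j ∉ A` while using the
uniform distribution on `{0,1}` for `j ∈ A`.  If `H(V^j | V^{1:j−1}, S^{1:n}) > 1 − δ` (in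
bits) for every `j ∈ A`, then `D(P ‖ Q) ≤ |A|·δ ≤ n·δ`, and by Pinsker's inequality the
variational distance satisfies `𝕍(P, Q) ≤ √(2 log 2) · √(n δ)`. -/
theorem kl_bound_and_pinsker_uniformized_prefix_conditionals
    {S : Type*} [Fintype S] [DecidableEq S]
    (n : ℕ) (hn : 1 ≤ n) (δ : ℝ) (hδ : 0 < δ)
    (P : (Fin n → Bool) × (Fin n → S) → ℝ)
    (hPpos : ∀ z, 0 < P z) (hP1 : ∑ z, P z = 1)
    (PS : (Fin n → S) → ℝ) (hPS : ∀ s, PS s = ∑ v, P (v, s))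
    (A : Finset (Fin n))
    -- `condP j b v s` is `P(V^j = b | V^{1:j-1} = v^{1:j-1}, S^{1:n} = s)` under `P`.
    (condP : Fin n → Bool → (Fin n → Bool) → (Fin n → S) → ℝ)
    (hcondP : ∀ j b v s, condP j b v s =
      (∑ w ∈ Finset.univ.filter
          (fun w : Fin n → Bool => (∀ i, i < j → w i = v i) ∧ w j = b), P (w, s)) /
      (∑ w ∈ Finset.univ.filter
          (fun w : Fin n → Bool => ∀ i, i < j → w i = v i), P (w, s)))
    (Q : (Fin n → Bool) × (Fin n → S) → ℝ)
    (hQ : ∀ v s, Q (v, s) =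
      PS s * ∏ j, (if j ∈ A then (1 / 2 : ℝ) else condP j (v j) v s))
    -- `Hc j` is the conditional Shannon entropy `H(V^j | V^{1:j-1}, S^{1:n})` in bits.
    (Hc : Fin n → ℝ)
    (hHc : ∀ j, Hc j =
      -∑ z : (Fin n → Bool) × (Fin n → S), P z * Real.logb 2 (condP j (z.1 j) z.1 z.2))
    (hhigh : ∀ j ∈ A, 1 - δ < Hc j) :
    (∑ z, P z * Real.logb 2 (P z / Q z) ≤ (A.card : ℝ) * δ) ∧
    ((A.card : ℝ) * δ ≤ (n : ℝ) * δ) ∧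
    (∑ z, |P z - Q z| ≤ Real.sqrt (2 * Real.log 2) * Real.sqrt ((n : ℝ) * δ)) := by
  
  classical
  have hcpos := aux_cond_pos P condP hPpos hcondP
  have hcsum := aux_cond_sum P condP hPpos hcondP
  have hcdep := aux_cond_dep P condP hPpos hcondP
  have hchain : ∀ v s, P (v, s) = PS s * ∏ j, condP j (v j) v s := by
    intro v s
    rw [hPS]
    exact aux_chain P condP hPpos hcondP v s
  have hPSpos : ∀ s, 0 < PS s := by
    intro s
    rw [hPS]
    exact Finset.sum_pos (fun w _ => hPpos _) Finset.univ_nonempty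
  have hlog2pos : (0:ℝ) < Real.log 2 := Real.log_pos (by norm_num)
  -- the modified conditionals sum to one over v, for each fixed s
  have hQsum1 : ∀ s : Fin n → S,
      ∑ v : Fin n → Bool, ∏ j, (if j ∈ A then (1 / 2 : ℝ) else condP j (v j) v s) = 1 := by
    intro s
    have := aux_sum_prod (fun j b v => if j ∈ A then (1 / 2 : ℝ) else condP j b v s)
      (fun j b v w hvw => by
        by_cases hj : j ∈ A
        · simp [hj]
        · simp only [hj, if_false]
          exact hcdep j b v w s hvw)
      (fun j v => by
        by_cases hj : j ∈ A
        · norm_num [hj]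
        · simp only [hj, if_false]
          exact hcsum j v s) Finset.univ
    rw [Finset.card_univ, Fintype.card_fin, div_self (by positivity)] at this
    exact this
  have hQpos : ∀ z, 0 < Q z := by
    rintro ⟨v, s⟩
    rw [hQ]
    apply mul_pos (hPSpos s)
    apply Finset.prod_pos
    intro j _
    by_cases hj : j ∈ A
    · simp [hj]
    · simp only [hj, if_false]
      exact hcpos j (v j) v s
  have hQ1 : ∑ z, Q z = 1 := by
    rw [Fintype.sum_prod_type_right]
    have : ∀ s : Fin n → S, ∑ v : Fin n → Bool, Q (v, s) = PS s := by
      intro s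
      calc ∑ v : Fin n → Bool, Q (v, s)
          = PS s * ∑ v : Fin n → Bool,
              ∏ j, (if j ∈ A then (1 / 2 : ℝ) else condP j (v j) v s) := by
            rw [Finset.mul_sum]
            exact Finset.sum_congr rfl fun v _ => hQ v s
        _ = PS s := by rw [hQsum1 s, mul_one]
    rw [Finset.sum_congr rfl fun s _ => this s]
    rw [Finset.sum_congr rfl fun s (_ : s ∈ Finset.univ) => hPS s]
    rw [← Fintype.sum_prod_type_right]
    exact hP1
  -- the likelihood ratio
  have hratio : ∀ v s, P (v, s) / Q (v, s) = ∏ j ∈ A, (2 * condP j (v j) v s) := by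
    intro v s
    rw [hchain, hQ, mul_div_mul_left _ _ (hPSpos s).ne', ← Finset.prod_div_distrib]
    have : ∀ j : Fin n, condP j (v j) v s / (if j ∈ A then (1 / 2 : ℝ) else condP j (v j) v s)
        = (if j ∈ A then 2 * condP j (v j) v s else 1) := by
      intro j
      by_cases hj : j ∈ A
      · simp only [hj, if_true]; ring
      · simp only [hj, if_false]
        exact div_self (hcpos j (v j) v s).ne'
    rw [Finset.prod_congr rfl fun j _ => this j, Finset.prod_ite_mem, Finset.univ_inter]
  have hlogratio : ∀ v s, Real.logb 2 (P (v, s) / Q (v, s))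
      = ∑ j ∈ A, (1 + Real.logb 2 (condP j (v j) v s)) := by
    intro v s
    rw [hratio, Real.logb_prod _ _ (fun j _ => by have := hcpos j (v j) v s; positivity)]
    apply Finset.sum_congr rfl
    intro j _
    rw [Real.logb_mul (by norm_num) (hcpos j (v j) v s).ne',
      Real.logb_self_eq_one (by norm_num)]
  -- the KL divergence in bits
  have hD : ∑ z, P z * Real.logb 2 (P z / Q z) = ∑ j ∈ A, (1 - Hc j) := by
    calc ∑ z, P z * Real.logb 2 (P z / Q z)
        = ∑ z : (Fin n → Bool) × (Fin n → S),
            ∑ j ∈ A, (P z * 1 + P z * Real.logb 2 (condP j (z.1 j) z.1 z.2)) := by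
          apply Finset.sum_congr rfl
          rintro ⟨v, s⟩ _
          rw [hlogratio v s, Finset.mul_sum]
          exact Finset.sum_congr rfl fun j _ => by ring
      _ = ∑ j ∈ A, ∑ z : (Fin n → Bool) × (Fin n → S),
            (P z * 1 + P z * Real.logb 2 (condP j (z.1 j) z.1 z.2)) := Finset.sum_comm
      _ = ∑ j ∈ A, (1 - Hc j) := by
          apply Finset.sum_congr rfl
          intro j _
          rw [Finset.sum_add_distrib]
          simp only [mul_one]
          rw [hP1, hHc j]
          ring
  have hDle : ∑ z, P z * Real.logb 2 (P z / Q z) ≤ (A.card : ℝ) * δ := by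
    rw [hD]
    calc ∑ j ∈ A, (1 - Hc j) ≤ ∑ j ∈ A, δ :=
          Finset.sum_le_sum fun j hj => by have := hhigh j hj; linarith
      _ = (A.card : ℝ) * δ := by rw [Finset.sum_const, nsmul_eq_mul]
  have hcard : (A.card : ℝ) * δ ≤ (n : ℝ) * δ := by
    apply mul_le_mul_of_nonneg_right _ hδ.le
    have : A.card ≤ n := by
      have := Finset.card_le_univ A
      rwa [Fintype.card_fin] at this
    exact_mod_cast this
  refine ⟨hDle, hcard, ?_⟩
  -- Pinsker
  have hpinsker := aux_pinsker P Q hPpos hQpos hP1 hQ1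
  have hnat : ∑ z, P z * Real.log (P z / Q z)
      = (∑ z, P z * Real.logb 2 (P z / Q z)) * Real.log 2 := by
    rw [Finset.sum_mul]
    apply Finset.sum_congr rfl
    intro z _
    rw [Real.logb]
    field_simp
  have hDnat_le : 2 * ∑ z, P z * Real.log (P z / Q z)
      ≤ (2 * Real.log 2) * ((n : ℝ) * δ) := by
    rw [hnat]
    nlinarith [hDle.trans hcard]
  calc ∑ z, |P z - Q z| ≤ Real.sqrt (2 * ∑ z, P z * Real.log (P z / Q z)) := hpinsker
    _ ≤ Real.sqrt ((2 * Real.log 2) * ((n : ℝ) * δ)) := Real.sqrt_le_sqrt hDnat_le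
    _ = Real.sqrt (2 * Real.log 2) * Real.sqrt ((n : ℝ) * δ) :=
        Real.sqrt_mul (by positivity) _
end
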